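/- Let f, g : X → Y be globally multi-split continuous functions, and let h : X → Y satisfy h(x) ∈ {f(x), g(x)} for all x ∈ X. Then h is globally multi-split continuous. -/

import Mathlib

open Filter Topology Set

universe u v w

variable {X : Type u} {Y : Type v} [TopologicalSpace X] [TopologicalSpace Y]

/-- `Z` is a set of extended values of `f` at `p`. -/
def ExtendedValues (f : X → Y) (p : X) (Z : Set Y) : Prop :=
  Z.Finite ∧ Z.Nonempty ∧
    (∀ y ∈ Z, ∀ U ∈ 𝓝 p, ∀ V ∈ 𝓝 y, (f '' U ∩ V).Nonempty) ∧
    (∀ V ∈ 𝓝ˢ Z, ∃ U ∈ 𝓝 p, f '' U ⊆ V)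

/-- `f` is multi-split continuous at `p`. -/
def MultiSplitAt (f : X → Y) (p : X) : Prop := ∃ Z : Set Y, ExtendedValues f p Z

theorem stmt14 (f g h : X → Y)
    (hf : ∀ p : X, MultiSplitAt f p) (hg : ∀ p : X, MultiSplitAt g p)
    (hh : ∀ x : X, h x = f x ∨ h x = g x) :
    ∀ p : X, MultiSplitAt h p := by
  intro p
  obtain ⟨Zf, hZf_fin, hZf_ne, hZf_a, hZf_b⟩ := hf p
  obtain ⟨Zg, hZg_fin, hZg_ne, hZg_a, hZg_b⟩ := hg p
  set F := Zf ∪ Zg with hF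
  have hF_fin : F.Finite := hZf_fin.union hZg_fin
  set P : Y → Prop := fun y => ∀ U ∈ 𝓝 p, ∀ V ∈ 𝓝 y, ((h '' U) ∩ V).Nonempty with hP
  set Z := {y ∈ F | P y} with hZdef
  have key : ∀ W ∈ 𝓝ˢ Z, ∃ U ∈ 𝓝 p, h '' U ⊆ W := by
    intro W hW
    have hch : ∀ y ∈ F \ Z, ∃ U ∈ 𝓝 p, ∃ V ∈ 𝓝 y, (h '' U) ∩ V = ∅ := by
      intro y hy
      rcases hy with ⟨hyF, hyZ⟩
      have hnp : ¬ P y := fun hp => hyZ ⟨hyF, hp⟩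
      simp only [hP] at hnp
      push_neg at hnp
      obtain ⟨U, hU, V, hV, hne⟩ := hnp
      exact ⟨U, hU, V, hV, hne⟩
    choose! Uy hUy Vy hVy hdisj using hch
    set W' := W ∪ ⋃ y ∈ F \ Z, Vy y with hW'
    have hW'F : W' ∈ 𝓝ˢ F := by
      rw [mem_nhdsSet_iff_forall] at hW ⊢
      intro y hyF
      by_cases hyZ : y ∈ Z
      · exact Filter.mem_of_superset (hW y hyZ) Set.subset_union_left
      · have hy' : y ∈ F \ Z := ⟨hyF, hyZ⟩
        exact Filter.mem_of_superset (hVy y hy')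
          ((Set.subset_biUnion_of_mem hy').trans Set.subset_union_right)
    obtain ⟨Uf, hUf, hUfs⟩ := hZf_b W' ((nhdsSet_mono Set.subset_union_left) hW'F)
    obtain ⟨Ug, hUg, hUgs⟩ := hZg_b W' ((nhdsSet_mono Set.subset_union_right) hW'F)
    have hUint : (⋂ y ∈ F \ Z, Uy y) ∈ 𝓝 p :=
      (Filter.biInter_mem (hF_fin.diff (t := Z))).mpr hUy
    refine ⟨Uf ∩ Ug ∩ ⋂ y ∈ F \ Z, Uy y,
      Filter.inter_mem (Filter.inter_mem hUf hUg) hUint, ?_⟩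
    rintro z ⟨x, ⟨⟨hxf, hxg⟩, hxI⟩, rfl⟩
    have hxW' : h x ∈ W' := by
      rcases hh x with hx | hx
      · rw [hx]; exact hUfs ⟨x, hxf, rfl⟩
      · rw [hx]; exact hUgs ⟨x, hxg, rfl⟩
    rcases hxW' with hxW | hxU
    · exact hxW
    · exfalso
      simp only [Set.mem_iUnion] at hxU
      obtain ⟨y, hy, hxV⟩ := hxU
      have hxUy : x ∈ Uy y := by
        have := Set.mem_iInter₂.mp hxI y hy
        exact this
      have : h x ∈ (h '' Uy y) ∩ Vy y := ⟨⟨x, hxUy, rfl⟩, hxV⟩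
      rw [hdisj y hy] at this
      exact this
  have hZne : Z.Nonempty := by
    by_contra hne
    rw [Set.not_nonempty_iff_eq_empty] at hne
    obtain ⟨U, hU, hsub⟩ := key ∅ (by rw [hne]; simp)
    exact hsub ⟨p, mem_of_mem_nhds hU, rfl⟩
  exact ⟨Z, hF_fin.subset (Set.sep_subset _ _), hZne, fun y hy => hy.2, key⟩
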